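/- Let S' be a set of elements of a complete Boolean algebra B such that S' is independent modulo {1}. Then the filter U₀ generated by S' ∪ {¬⋀I : I ⊆ S' infinite} is a proper filter, and every infinite subset I of S' satisfies ⋀I ∉ U₀. Hence if |S'| = |B|, any ultrafilter extending U₀ is Tukey-maximal. -/

import Mathlib

/-- A (proper) filter on a Boolean algebra, as a set. -/
def IsBAFilter {B : Type*} [BooleanAlgebra B] (F : Set B) : Prop :=
  ⊤ ∈ F ∧ ⊥ ∉ F ∧ (∀ x ∈ F, ∀ y : B, x ≤ y → y ∈ F) ∧ ∀ x ∈ F, ∀ y ∈ F, x ⊓ y ∈ F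

/-- An ultrafilter on a Boolean algebra. -/
def IsUltra {B : Type*} [BooleanAlgebra B] (U : Set B) : Prop :=
  IsBAFilter U ∧ ∀ x : B, x ∈ U ∨ xᶜ ∈ U

/-- The filter generated by a set `G`. -/
def filterGen {B : Type*} [BooleanAlgebra B] (G : Set B) : Set B :=
  {b : B | ∃ P : Finset B, (↑P : Set B) ⊆ G ∧ P.inf id ≤ b}

/-- If `S'` is independent modulo `{1}` in a complete Boolean algebra `B`,
then the filter `U₀` generated by `S' ∪ {¬⋀I : I ⊆ S' infinite}` is proper,
every infinite `I ⊆ S'` has `⋀I ∉ U₀`, and if `|S'| = |B|` then every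
ultrafilter extending `U₀` is Tukey-maximal: it contains a set `X` of size
`|B|` all of whose infinite subsets have meet outside the ultrafilter. -/
theorem stmt_10 {B : Type*} [CompleteBooleanAlgebra B] (S' : Set B)
    (hind : ∀ P Q : Finset B, (↑P : Set B) ⊆ S' → (↑Q : Set B) ⊆ S' → Disjoint P Q →
      (P.sup (fun x => xᶜ) ⊔ Q.sup id) ≠ ⊤) :
    ⊥ ∉ filterGen (S' ∪ {x : B | ∃ I ⊆ S', I.Infinite ∧ x = (sInf I)ᶜ}) ∧
    (∀ I ⊆ S', I.Infinite →
      sInf I ∉ filterGen (S' ∪ {x : B | ∃ I' ⊆ S', I'.Infinite ∧ x = (sInf I')ᶜ})) ∧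
    (Cardinal.mk S' = Cardinal.mk B →
      ∀ U : Set B, IsUltra U →
        filterGen (S' ∪ {x : B | ∃ I ⊆ S', I.Infinite ∧ x = (sInf I)ᶜ}) ⊆ U →
        ∃ X ⊆ U, Cardinal.mk X = Cardinal.mk B ∧ ∀ Y ⊆ X, Y.Infinite → sInf Y ∉ U) := by
    classical
  set G : Set B := S' ∪ {x : B | ∃ I ⊆ S', I.Infinite ∧ x = (sInf I)ᶜ} with hGdef
  have hcompl : ∀ (s : Finset B) (f : B → B), (s.inf f)ᶜ = s.sup (fun a => (f a)ᶜ) := by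
    intro s f
    induction s using Finset.induction_on with
    | empty => simp
    | insert _ _ h ih => simp [ih, compl_inf]
  have L : ∀ A Q : Finset B, (↑A : Set B) ⊆ S' → (↑Q : Set B) ⊆ S' → Disjoint A Q →
      A.inf id ⊓ Q.inf compl ≠ ⊥ := by
    intro A Q hA hQ hdis h
    apply hind A Q hA hQ hdis
    have h2 := congrArg compl h
    rw [compl_bot, compl_inf, hcompl, hcompl] at h2
    have e1 : A.sup (fun a => (id a)ᶜ) = A.sup (fun x => xᶜ) := rfl
    have e2 : Q.sup (fun a => (compl a)ᶜ) = Q.sup id :=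
      Finset.sup_congr rfl (fun a _ => compl_compl a)
    rw [e1, e2] at h2
    exact h2
  have M : ∀ P : Finset B, (↑P : Set B) ⊆ G → ∀ x : B,
      (x = ⊥ ∨ ∃ I ⊆ S', I.Infinite ∧ x = sInf I) → ¬ P.inf id ≤ x := by
    intro P hP x hx hle
    set A := P.filter (· ∈ S') with hAdef
    set C := P.filter (· ∉ S') with hCdef
    have hAS : (↑A : Set B) ⊆ S' := by
      intro a ha
      simp only [hAdef, Finset.coe_filter, Set.mem_setOf_eq] at ha
      exact ha.2
    have hchoice : ∀ q ∈ C, ∃ s, s ∈ S' ∧ s ∉ A ∧ sᶜ ≤ q := by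
      intro q hq
      simp only [hCdef, Finset.mem_filter] at hq
      have hqG : q ∈ G := hP hq.1
      rcases hqG with hqS | ⟨I, hIS, hIinf, rfl⟩
      · exact absurd hqS hq.2
      · obtain ⟨s, hs⟩ := (hIinf.diff A.finite_toSet).nonempty
        exact ⟨s, hIS hs.1, hs.2, compl_le_compl (sInf_le hs.1)⟩
    choose! f hf1 hf2 hf3 using hchoice
    set Q := C.image f with hQdef
    have hQS : (↑Q : Set B) ⊆ S' := by
      intro a ha
      simp only [hQdef, Finset.coe_image, Set.mem_image, Finset.mem_coe] at ha
      obtain ⟨q, hq, rfl⟩ := ha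
      exact hf1 q hq
    have hdis : Disjoint A Q := by
      rw [Finset.disjoint_right]
      intro a haQ haA
      simp only [hQdef, Finset.mem_image] at haQ
      obtain ⟨q, hq, rfl⟩ := haQ
      exact hf2 q hq haA
    have key : A.inf id ⊓ Q.inf compl ≤ P.inf id := by
      have hP' : P = A ∪ C := (Finset.filter_union_filter_not_eq _ P).symm
      rw [hP', Finset.inf_union]
      refine inf_le_inf le_rfl ?_
      rw [hQdef, Finset.inf_image]
      exact Finset.inf_mono_fun (fun q hq => hf3 q hq)
    rcases hx with rfl | ⟨I, hIS, hIinf, rfl⟩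
    · exact L A Q hAS hQS hdis (le_bot_iff.mp (key.trans hle))
    · obtain ⟨c, hc⟩ := (hIinf.diff ((A.finite_toSet).union (Q.finite_toSet))).nonempty
      have hcI : c ∈ I := hc.1
      have hcA : c ∉ A := fun h => hc.2 (Or.inl h)
      have hcQ : c ∉ Q := fun h => hc.2 (Or.inr h)
      have h1 : A.inf id ⊓ Q.inf compl ≤ c := (key.trans hle).trans (sInf_le hcI)
      apply L A (insert c Q) hAS ?_ ?_
      · rw [Finset.inf_insert]
        refine le_bot_iff.mp ?_
        have h2 : A.inf id ⊓ (compl c ⊓ Q.inf compl) ≤ c ⊓ cᶜ := by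
          refine le_inf ?_ ?_
          · exact (inf_le_inf le_rfl inf_le_right).trans h1
          · exact inf_le_right.trans inf_le_left
        simpa using h2
      · intro a ha
        rcases Finset.mem_insert.mp (Finset.mem_coe.mp ha) with rfl | h
        · exact hIS hcI
        · exact hQS h
      · rw [Finset.disjoint_right]
        intro a haQ haA
        rcases Finset.mem_insert.mp haQ with rfl | h
        · exact hcA haA
        · exact Finset.disjoint_right.mp hdis h haA
  refine ⟨?_, ?_, ?_⟩
  · rintro ⟨P, hP, hle⟩
    exact M P hP ⊥ (Or.inl rfl) hle
  · rintro I hIS hIinf ⟨P, hP, hle⟩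
    exact M P hP (sInf I) (Or.inr ⟨I, hIS, hIinf, rfl⟩) hle
  · intro hcard U hU hsub
    refine ⟨S', ?_, hcard, ?_⟩
    · intro s hs
      have hsG : (↑({s} : Finset B) : Set B) ⊆ G := by
        simp only [Finset.coe_singleton, Set.singleton_subset_iff]
        exact Or.inl hs
      exact hsub ⟨{s}, hsG, by simp⟩
    · intro Y hYS hYinf hmem
      have hyG : (↑({(sInf Y)ᶜ} : Finset B) : Set B) ⊆ G := by
        simp only [Finset.coe_singleton, Set.singleton_subset_iff]
        exact Or.inr ⟨Y, hYS, hYinf, rfl⟩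
      have h1 : (sInf Y)ᶜ ∈ U := hsub ⟨{(sInf Y)ᶜ}, hyG, by simp⟩
      have h2 := hU.1.2.2.2 _ hmem _ h1
      rw [inf_compl_eq_bot] at h2
      exact hU.1.2.1 h2
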